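/- With respect to the simple roots r₁,…,r₆, every element v of the E₆ root set S can be written as v = n₁r₁ + n₂r₂ + n₃r₃ + n₄r₄ + n₅r₅ + n₆r₆ with integer coefficients nᵢ that are either all nonnegative or all nonpositive; the subset S⁺ of elements of S with all coefficients nonnegative (the positive roots) has exactly 36 elements, each of squared norm 2, and S is the disjoint union of S⁺ and −S⁺. -/

import Mathlib

noncomputable section

open scoped RealInnerProductSpace

/-- The standard orthonormal basis vectors `e₁, …, e₆` of `ℝ⁶` (0-indexed). -/
def e : Fin 6 → EuclideanSpace ℝ (Fin 6) := fun i => EuclideanSpace.single i 1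

/-- The simple roots of `E₆` (0-indexed as `r 0, …, r 5`). -/
def r : Fin 6 → EuclideanSpace ℝ (Fin 6) :=
  ![e 0 + e 1, e 1 - e 0, e 2 - e 1, e 3 - e 2, e 4 - e 3,
    (1/2 : ℝ) • (e 0 - e 1 - e 2 - e 3 - e 4 + Real.sqrt 3 • e 5)]

/-- The `E₆` root set: the vectors `±eᵢ±eⱼ` for `1 ≤ i < j ≤ 5`, together with the vectors
`(ε₁e₁+ε₂e₂+ε₃e₃+ε₄e₄+ε₅e₅+ε√3·e₆)/2` with all signs `±1` and `ε·ε₁ε₂ε₃ε₄ε₅ = 1`. -/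
def S : Set (EuclideanSpace ℝ (Fin 6)) :=
  {v | ∃ i j : Fin 6, i < j ∧ (j : ℕ) ≤ 4 ∧
    ∃ a b : ℝ, (a = 1 ∨ a = -1) ∧ (b = 1 ∨ b = -1) ∧ v = a • e i + b • e j} ∪
  {v | ∃ ε : Fin 6 → ℝ, (∀ k, ε k = 1 ∨ ε k = -1) ∧
    ε 5 * (ε 0 * ε 1 * ε 2 * ε 3 * ε 4) = 1 ∧
    v = (1/2 : ℝ) • (ε 0 • e 0 + ε 1 • e 1 + ε 2 • e 2 + ε 3 • e 3 + ε 4 • e 4 +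
      (ε 5 * Real.sqrt 3) • e 5)}

/-- The positive roots of `E₆`: the elements of `S` all of whose integer coefficients with
respect to the simple roots `r₁, …, r₆` are nonnegative. -/
def Spos : Set (EuclideanSpace ℝ (Fin 6)) :=
  {v | v ∈ S ∧ ∃ n : Fin 6 → ℤ, v = ∑ i, (n i : ℝ) • r i ∧ ∀ i, 0 ≤ n i}

/-! ### Auxiliary integer model -/

variable {α : Type*} in
@[simp] lemma vec6_5 (a b c d e f : α) : ![a,b,c,d,e,f] 5 = f := rfl

/-- `psi d` is the vector with coordinates `d k / 2` for `k ≤ 4` and `d 5 * √3 / 2`. -/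
def psi (d : Fin 6 → ℤ) : EuclideanSpace ℝ (Fin 6) :=
  (WithLp.equiv 2 (Fin 6 → ℝ)).symm fun i => (d i : ℝ) / 2 * (if i = 5 then Real.sqrt 3 else 1)

lemma psi_apply (d : Fin 6 → ℤ) (i : Fin 6) :
    psi d i = (d i : ℝ) / 2 * (if i = 5 then Real.sqrt 3 else 1) := rfl

lemma sqrt3_pos : (0:ℝ) < Real.sqrt 3 := Real.sqrt_pos.2 (by norm_num)

lemma psi_inj : Function.Injective psi := by
  intro p q h
  funext i
  have h1 : psi p i = psi q i := by rw [h]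
  rw [psi_apply, psi_apply] at h1
  rcases eq_or_ne i 5 with h5 | h5
  · simp only [if_pos h5] at h1
    have h2 := mul_right_cancel₀ (ne_of_gt sqrt3_pos) h1
    have : (p i : ℝ) = q i := by linarith
    exact_mod_cast this
  · simp only [if_neg h5, mul_one] at h1
    have : (p i : ℝ) = q i := by linarith
    exact_mod_cast this

lemma psi_neg (d : Fin 6 → ℤ) : psi (-d) = -(psi d) := by
  ext i
  show psi (-d) i = -(psi d i)
  rw [psi_apply, psi_apply, Pi.neg_apply]
  push_cast
  ring

/-- Doubled coordinates of `∑ i, c i • r i`. -/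
def sumd (c : Fin 6 → ℤ) : Fin 6 → ℤ := fun k =>
  if k = 0 then 2 * c 0 - 2 * c 1 + c 5
  else if k = 1 then 2 * c 0 + 2 * c 1 - 2 * c 2 - c 5
  else if k = 2 then 2 * c 2 - 2 * c 3 - c 5
  else if k = 3 then 2 * c 3 - 2 * c 4 - c 5
  else if k = 4 then 2 * c 4 - c 5
  else c 5

/-- Four times the coefficient vector of the vector with doubled coordinates `d`. -/
def mcoef (d : Fin 6 → ℤ) : Fin 6 → ℤ := fun k =>
  if k = 0 then d 0 + d 1 + d 2 + d 3 + d 4 + 3 * d 5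
  else if k = 1 then -d 0 + d 1 + d 2 + d 3 + d 4 + 5 * d 5
  else if k = 2 then 2 * (d 2 + d 3 + d 4 + 3 * d 5)
  else if k = 3 then 2 * (d 3 + d 4 + 2 * d 5)
  else if k = 4 then 2 * (d 4 + d 5)
  else 4 * d 5

lemma mcoef_sumd (c : Fin 6 → ℤ) : mcoef (sumd c) = fun k => 4 * c k := by
  funext k
  fin_cases k <;> simp [mcoef, sumd] <;> ring

lemma sumd_mcoef (d : Fin 6 → ℤ) : sumd (mcoef d) = fun k => 4 * d k := by
  funext k
  fin_cases k <;> simp [mcoef, sumd] <;> ring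

lemma sum_r_eq (n : Fin 6 → ℤ) : ∑ i, (n i : ℝ) • r i = psi (sumd n) := by
  ext k
  have h : (∑ i, (n i : ℝ) • r i) k = ∑ i, (n i : ℝ) * r i k := by
    simp [Fin.sum_univ_six]
  rw [h, psi_apply]
  fin_cases k <;>
    simp [r, e, sumd, Fin.sum_univ_six, EuclideanSpace.single_apply, PiLp.add_apply,
      PiLp.sub_apply, PiLp.smul_apply, smul_eq_mul] <;> push_cast <;> ring

lemma sumd_eq_of (n : Fin 6 → ℤ) (d : Fin 6 → ℤ) (h : ∀ i, 4 * n i = mcoef d i) :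
    sumd n = d := by
  have h0 : (fun i => 4 * n i) = mcoef d := funext h
  have h1 : sumd (fun i => 4 * n i) = fun k => 4 * d k := by rw [h0, sumd_mcoef]
  funext k
  have h2 : sumd (fun i => 4 * n i) k = 4 * sumd n k := by
    fin_cases k <;> simp [sumd] <;> ring
  have h3 := congrFun h1 k
  rw [h2] at h3
  omega

/-! ### The finite integer model of the root system -/

def sg (b : Bool) : ℤ := if b then 1 else -1

def fA (i j : Fin 6) (a b : Bool) : Fin 6 → ℤ :=
  fun k => if k = i then 2 * sg a else if k = j then 2 * sg b else 0

def gB (ε : Fin 6 → Bool) : Fin 6 → ℤ := fun k => sg (ε k)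

def AA : Finset ((Fin 6 × Fin 6) × Bool × Bool) :=
  Finset.univ.filter fun x => x.1.1 < x.1.2 ∧ (x.1.2 : ℕ) ≤ 4

def BB : Finset (Fin 6 → Bool) :=
  Finset.univ.filter fun ε => ε 5 = ((((ε 0 == ε 1) == ε 2) == ε 3) == ε 4)

def S' : Finset (Fin 6 → ℤ) :=
  AA.image (fun x => fA x.1.1 x.1.2 x.2.1 x.2.2) ∪ BB.image gB

def Ppos : Finset (Fin 6 → ℤ) := S'.filter fun d => ∀ i, 0 ≤ mcoef d i

lemma parity_iff' : ∀ b0 b1 b2 b3 b4 b5 : Bool,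
    (sg b5 * (sg b0 * sg b1 * sg b2 * sg b3 * sg b4) = 1 ↔
      b5 = ((((b0 == b1) == b2) == b3) == b4)) := by decide

lemma sg_of (x : ℝ) (hx : x = 1 ∨ x = -1) : x = ((sg (decide (x = 1)) : ℤ) : ℝ) := by
  rcases hx with h | h <;> subst h
  · rw [decide_eq_true rfl]; norm_num [sg]
  · rw [decide_eq_false (by norm_num)]; norm_num [sg]

lemma sg_cases (b : Bool) : ((sg b : ℤ) : ℝ) = 1 ∨ ((sg b : ℤ) : ℝ) = -1 := by
  cases b <;> norm_num [sg]

lemma psi_fA (i j : Fin 6) (hij : i < j) (hj : (j : ℕ) ≤ 4) (a b : Bool) :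
    psi (fA i j a b) = ((sg a : ℤ) : ℝ) • e i + ((sg b : ℤ) : ℝ) • e j := by
  have hij' : (i : ℕ) < (j : ℕ) := hij
  ext k
  have hrhs : (((sg a : ℤ) : ℝ) • e i + ((sg b : ℤ) : ℝ) • e j) k
      = ((sg a : ℤ) : ℝ) * (if k = i then 1 else 0)
        + ((sg b : ℤ) : ℝ) * (if k = j then 1 else 0) := by
    simp [e, EuclideanSpace.single_apply, PiLp.add_apply, PiLp.smul_apply, smul_eq_mul]
  show psi (fA i j a b) k = _
  rw [psi_apply, hrhs]
  unfold fA
  rcases eq_or_ne k i with hki | hki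
  · have hk5 : k ≠ 5 := by
      subst hki
      intro h
      have : (k : ℕ) = 5 := by rw [h]; rfl
      omega
    have hkj : k ≠ j := by
      subst hki
      intro h
      rw [h] at hij'
      omega
    rw [if_pos hki, if_pos hki, if_neg hkj, if_neg hk5]
    push_cast
    ring
  · rw [if_neg hki, if_neg hki]
    rcases eq_or_ne k j with hkj | hkj
    · have hk5 : k ≠ 5 := by
        subst hkj
        intro h
        have : (k : ℕ) = 5 := by rw [h]; rfl
        omega
      rw [if_pos hkj, if_pos hkj, if_neg hk5]
      push_cast
      ring
    · rw [if_neg hkj, if_neg hkj]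
      push_cast
      ring

lemma psi_gB (b : Fin 6 → Bool) :
    psi (gB b) = (1/2 : ℝ) • (((sg (b 0) : ℤ) : ℝ) • e 0 + ((sg (b 1) : ℤ) : ℝ) • e 1 +
      ((sg (b 2) : ℤ) : ℝ) • e 2 + ((sg (b 3) : ℤ) : ℝ) • e 3 + ((sg (b 4) : ℤ) : ℝ) • e 4 +
      (((sg (b 5) : ℤ) : ℝ) * Real.sqrt 3) • e 5) := by
  ext k
  show psi (gB b) k = _
  rw [psi_apply]
  fin_cases k <;>
    simp [gB, e, EuclideanSpace.single_apply, PiLp.add_apply, PiLp.smul_apply, smul_eq_mul] <;>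
    ring

set_option maxHeartbeats 4000000 in
set_option maxRecDepth 10000 in
lemma dec_dvd : ∀ d ∈ S', ∀ i, (4:ℤ) ∣ mcoef d i := by decide

set_option maxHeartbeats 4000000 in
set_option maxRecDepth 10000 in
lemma dec_sign : ∀ d ∈ S', (∀ i, 0 ≤ mcoef d i) ∨ (∀ i, mcoef d i ≤ 0) := by decide

set_option maxHeartbeats 4000000 in
set_option maxRecDepth 10000 in
lemma dec_card : Ppos.card = 36 := by decide

set_option maxHeartbeats 4000000 in
set_option maxRecDepth 10000 in
lemma dec_norm : ∀ d ∈ S',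
    d 0^2 + d 1^2 + d 2^2 + d 3^2 + d 4^2 + 3 * d 5^2 = (8:ℤ) := by decide

set_option maxHeartbeats 4000000 in
set_option maxRecDepth 10000 in
lemma dec_neg_mem : ∀ d ∈ S', -d ∈ S' := by decide

set_option maxHeartbeats 4000000 in
set_option maxRecDepth 10000 in
lemma dec_pos_or_neg : ∀ d ∈ S', d ∈ Ppos ∨ -d ∈ Ppos := by decide

set_option maxHeartbeats 4000000 in
set_option maxRecDepth 10000 in
lemma dec_not_both : ∀ d ∈ Ppos, -d ∉ Ppos := by decide

lemma inner_psi (d : Fin 6 → ℤ) :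
    ⟪psi d, psi d⟫ = ((d 0^2 + d 1^2 + d 2^2 + d 3^2 + d 4^2 + 3 * d 5^2 : ℤ) : ℝ) / 4 := by
  have h3 : Real.sqrt 3 * Real.sqrt 3 = 3 := Real.mul_self_sqrt (by norm_num)
  rw [PiLp.inner_apply]
  simp only [RCLike.inner_apply, conj_trivial, psi_apply, Fin.sum_univ_six]
  norm_num
  push_cast
  ring_nf
  nlinarith [h3, sq_nonneg ((d 5 : ℝ))]

lemma mem_S'_fA (i j : Fin 6) (hij : i < j) (hj : (j:ℕ) ≤ 4) (a b : Bool) :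
    fA i j a b ∈ S' := by
  apply Finset.mem_union_left
  exact Finset.mem_image.2 ⟨((i,j),(a,b)), Finset.mem_filter.2 ⟨Finset.mem_univ _, hij, hj⟩, rfl⟩

lemma mem_S'_gB (b : Fin 6 → Bool) (hb : b 5 = ((((b 0 == b 1) == b 2) == b 3) == b 4)) :
    gB b ∈ S' :=
  Finset.mem_union_right _
    (Finset.mem_image.2 ⟨b, Finset.mem_filter.2 ⟨Finset.mem_univ _, hb⟩, rfl⟩)

lemma S_eq : S = psi '' ↑S' := by
  ext v
  constructor
  · rintro (⟨i, j, hij, hj, a, b, ha, hb, hv⟩ | ⟨ε, hε, hpar, hv⟩)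
    · refine ⟨fA i j (decide (a = 1)) (decide (b = 1)), mem_S'_fA i j hij hj _ _, ?_⟩
      rw [psi_fA i j hij hj, ← sg_of a ha, ← sg_of b hb, hv]
    · have hk : ∀ k, ε k = ((sg (decide (ε k = 1)) : ℤ) : ℝ) := fun k => sg_of (ε k) (hε k)
      have hpar' : sg (decide (ε 5 = 1)) * (sg (decide (ε 0 = 1)) * sg (decide (ε 1 = 1)) *
          sg (decide (ε 2 = 1)) * sg (decide (ε 3 = 1)) * sg (decide (ε 4 = 1))) = 1 := by
        rw [hk 0, hk 1, hk 2, hk 3, hk 4, hk 5] at hpar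
        exact_mod_cast hpar
      refine ⟨gB (fun k => decide (ε k = 1)),
        mem_S'_gB _ ((parity_iff' _ _ _ _ _ _).1 hpar'), ?_⟩
      rw [psi_gB, ← hk 0, ← hk 1, ← hk 2, ← hk 3, ← hk 4, ← hk 5, hv]
  · rintro ⟨d, hd, rfl⟩
    rcases Finset.mem_union.1 hd with hmem | hmem
    · obtain ⟨x, hx, rfl⟩ := Finset.mem_image.1 hmem
      obtain ⟨-, hlt, hle⟩ := Finset.mem_filter.1 hx
      exact Or.inl ⟨x.1.1, x.1.2, hlt, hle, _, _, sg_cases _, sg_cases _,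
        (psi_fA _ _ hlt hle _ _)⟩
    · obtain ⟨b, hb, rfl⟩ := Finset.mem_image.1 hmem
      have hb' := (Finset.mem_filter.1 hb).2
      have hpar : ((sg (b 5) : ℤ) : ℝ) * (((sg (b 0) : ℤ) : ℝ) * ((sg (b 1) : ℤ) : ℝ) *
          ((sg (b 2) : ℤ) : ℝ) * ((sg (b 3) : ℤ) : ℝ) * ((sg (b 4) : ℤ) : ℝ)) = 1 := by
        have h := (parity_iff' (b 0) (b 1) (b 2) (b 3) (b 4) (b 5)).2 hb'
        exact_mod_cast h
      exact Or.inr ⟨fun k => ((sg (b k) : ℤ) : ℝ), fun k => sg_cases _, hpar, (psi_gB b).symm ▸ rfl⟩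

lemma Spos_eq : Spos = psi '' ↑Ppos := by
  ext v
  constructor
  · rintro ⟨hvS, n, hvn, hn⟩
    rw [S_eq] at hvS
    obtain ⟨d, hd, rfl⟩ := hvS
    have h4 : sumd n = d := psi_inj (by rw [← sum_r_eq, ← hvn])
    have hm : mcoef d = fun k => 4 * n k := by rw [← h4, mcoef_sumd]
    refine ⟨d, Finset.mem_filter.2 ⟨hd, fun i => ?_⟩, rfl⟩
    have h1 := congrFun hm i
    have h2 := hn i
    omega
  · rintro ⟨d, hd, rfl⟩
    obtain ⟨hdS, hdpos⟩ := Finset.mem_filter.1 hd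
    have hdvd := dec_dvd d hdS
    have h4 : ∀ i, 4 * (mcoef d i / 4) = mcoef d i := fun i => Int.mul_ediv_cancel' (hdvd i)
    have hsum : sumd (fun i => mcoef d i / 4) = d := sumd_eq_of _ d h4
    refine ⟨?_, fun i => mcoef d i / 4, ?_, fun i => ?_⟩
    · rw [S_eq]; exact ⟨d, hdS, rfl⟩
    · rw [sum_r_eq, hsum]
    · show 0 ≤ mcoef d i / 4
      have h1 := hdpos i
      have h2 := h4 i
      omega

/-- Every `E₆` root is an integral combination of the simple roots with coefficients either
all nonnegative or all nonpositive; there are exactly `36` positive roots, each of squared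
norm `2`, and `S` is the disjoint union of the positive roots and their negatives. -/
theorem e6_positive_roots :
    (∀ v ∈ S, ∃ n : Fin 6 → ℤ, v = ∑ i, (n i : ℝ) • r i ∧
      ((∀ i, 0 ≤ n i) ∨ (∀ i, n i ≤ 0))) ∧
    Spos.ncard = 36 ∧
    (∀ v ∈ Spos, ⟪v, v⟫ = 2) ∧
    S = Spos ∪ (-Spos) ∧
    Disjoint Spos (-Spos) := by
  refine ⟨?_, ?_, ?_, ?_, ?_⟩
  · intro v hv
    rw [S_eq] at hv
    obtain ⟨d, hd, rfl⟩ := hv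
    have hdvd := dec_dvd d hd
    have h4 : ∀ i, 4 * (mcoef d i / 4) = mcoef d i := fun i => Int.mul_ediv_cancel' (hdvd i)
    have hsum : sumd (fun i => mcoef d i / 4) = d := sumd_eq_of _ d h4
    refine ⟨fun i => mcoef d i / 4, by rw [sum_r_eq, hsum], ?_⟩
    rcases dec_sign d hd with h | h
    · left; intro i; show 0 ≤ mcoef d i / 4; have h1 := h i; have h2 := h4 i; omega
    · right; intro i; show mcoef d i / 4 ≤ 0; have h1 := h i; have h2 := h4 i; omega
  · rw [Spos_eq, Set.ncard_image_of_injective _ psi_inj, Set.ncard_coe_finset, dec_card]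
  · intro v hv
    rw [Spos_eq] at hv
    obtain ⟨d, hd, rfl⟩ := hv
    have hdS := (Finset.mem_filter.1 hd).1
    rw [inner_psi, dec_norm d hdS]
    norm_num
  · ext v
    constructor
    · intro hv
      rw [S_eq] at hv
      obtain ⟨d, hd, rfl⟩ := hv
      rcases dec_pos_or_neg d hd with h | h
      · left; rw [Spos_eq]; exact ⟨d, h, rfl⟩
      · right
        rw [Set.mem_neg, Spos_eq]
        exact ⟨-d, h, by rw [psi_neg]⟩
    · rintro (h | h)
      · exact h.1
      · rw [Set.mem_neg] at h
        have h1 := h.1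
        rw [S_eq] at h1 ⊢
        obtain ⟨d, hd, hdv⟩ := h1
        exact ⟨-d, dec_neg_mem d hd, by rw [psi_neg, hdv, neg_neg]⟩
  · rw [Set.disjoint_left]
    intro v hv hv'
    rw [Spos_eq] at hv
    obtain ⟨d, hd, rfl⟩ := hv
    rw [Set.mem_neg, Spos_eq] at hv'
    obtain ⟨d', hd', hdd⟩ := hv'
    have hne : d' = -d := psi_inj (by rw [hdd, ← psi_neg])
    exact dec_not_both d hd (hne ▸ hd')
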